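/- arXiv:1204.0949 — 5 statements merged into one kernel-verified Lean document; each statement's English description precedes it below -/
import Mathlib

section
/- For any 1-net, i.e., a family (2^n ℤ + k_n) for n ≥ 1 of pairwise disjoint subsets of ℤ, there is at most one integer i ∈ ℤ that does not belong to any of the sets 2^n ℤ + k_n. -/
/-- The level `n` of a candidate 1-net: the arithmetic progression `2^n ℤ + k n`. -/
def netLevel (k : ℕ+ → ℤ) (n : ℕ+) : Set ℤ :=
  {i : ℤ | ∃ t : ℤ, i = 2 ^ (n : ℕ) * t + k n}

/-- A 1-net: the levels `2^n ℤ + k n`, for `n ≥ 1`, are pairwise disjoint. -/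
def IsOneNet (k : ℕ+ → ℤ) : Prop :=
  Pairwise fun m n : ℕ+ => Disjoint (netLevel k m) (netLevel k n)

lemma mem_netLevel_iff (k : ℕ+ → ℤ) (n : ℕ+) (i : ℤ) :
    i ∈ netLevel k n ↔ (2:ℤ) ^ (n:ℕ) ∣ i - k n := by
  constructor
  · rintro ⟨t, rfl⟩; exact ⟨t, by ring⟩
  · rintro ⟨t, ht⟩; exact ⟨t, by linarith⟩

lemma card_filter_residue (N n : ℕ) (hn : n ≤ N) (c : ℤ) :
    ((Finset.range (2^N)).filter (fun r : ℕ => (2:ℤ)^n ∣ (r:ℤ) - c)).card = 2^(N-n) := by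
  have hpos : (0:ℤ) < 2^n := by positivity
  set c' : ℕ := ((c % 2^n).toNat) with hc'def
  have hc' : (c' : ℤ) = c % 2^n := Int.toNat_of_nonneg (Int.emod_nonneg c (by positivity))
  have hcastn : ((2^n : ℕ) : ℤ) = (2:ℤ)^n := by push_cast; ring
  have hc'lt : c' < 2^n := by
    have := Int.emod_lt_of_pos c hpos
    omega
  have hsplit : 2^(N-n) * 2^n = 2^N := by
    rw [← pow_add]; congr 1; omega
  symm
  rw [← Finset.card_range (2^(N-n))]
  apply Finset.card_bij (fun i _ => i * 2^n + c')
  · intro a ha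
    simp only [Finset.mem_range] at ha
    simp only [Finset.mem_filter, Finset.mem_range]
    constructor
    · calc a * 2^n + c' < (a+1) * 2^n := by nlinarith
        _ ≤ 2^(N-n) * 2^n := Nat.mul_le_mul_right _ (by omega)
        _ = 2^N := hsplit
    · refine ⟨(a : ℤ) - c / 2^n, ?_⟩
      have := Int.emod_def c (2^n)
      push_cast [hc']
      rw [this]; ring
  · intro a ha b hb h
    have h2 : (0:ℕ) < 2^n := Nat.pow_pos (by norm_num)
    exact Nat.eq_of_mul_eq_mul_right h2 (by omega)
  · intro r hr
    simp only [Finset.mem_filter, Finset.mem_range] at hr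
    obtain ⟨hrlt, hdvd⟩ := hr
    have hmod : r % 2^n = c' := by
      have h1 : (c:ℤ) % 2^n = (r:ℤ) % 2^n := (Int.modEq_iff_dvd.mpr hdvd)
      have h2 : ((r % 2^n : ℕ) : ℤ) = (r:ℤ) % 2^n := by push_cast; ring_nf
      omega
    refine ⟨r / 2^n, Finset.mem_range.mpr ?_, ?_⟩
    · have h2 : (0:ℕ) < 2^n := Nat.pow_pos (by norm_num)
      rw [Nat.div_lt_iff_lt_mul h2, hsplit]
      exact hrlt
    · rw [← hmod, Nat.mul_comm (r / 2^n) (2^n), Nat.div_add_mod]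

theorem sum_geom_Icc (N : ℕ) : ∑ n ∈ Finset.Icc 1 N, 2^(N-n) = 2^N - 1 := by
  induction N with
  | zero => simp
  | succ N ih =>
    rw [Finset.sum_Icc_succ_top (by omega)]
    have : ∑ n ∈ Finset.Icc 1 N, 2^(N+1-n) = 2 * ∑ n ∈ Finset.Icc 1 N, 2^(N-n) := by
      rw [Finset.mul_sum]
      apply Finset.sum_congr rfl
      intro n hn
      simp only [Finset.mem_Icc] at hn
      rw [← pow_succ']
      congr 1; omega
    rw [this, ih]
    have h1 : 1 ≤ 2^N := Nat.one_le_two_pow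
    have h0 : 2^(N+1-(N+1)) = 1 := by simp
    rw [h0, pow_succ]
    omega

/-- For any 1-net, there is at most one integer belonging to no level. -/
theorem at_most_one_uncovered_cell (k : ℕ+ → ℤ) (hk : IsOneNet k) :
    Set.Subsingleton {i : ℤ | ∀ n : ℕ+, i ∉ netLevel k n} := by
  intro i hi j hj
  have key : ∀ N : ℕ, (2:ℤ)^N ∣ i - j := by
    intro N
    classical
    set c' : ℕ → ℤ := fun n => if h : 0 < n then k ⟨n, h⟩ else 0 with hc'def
    set T : ℕ → Finset ℕ :=
      fun n => (Finset.range (2^N)).filter (fun r : ℕ => (2:ℤ)^n ∣ (r:ℤ) - c' n) with hTdef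
    have hTmem : ∀ n r, r ∈ T n ↔ r < 2^N ∧ (2:ℤ)^n ∣ (r:ℤ) - c' n := by
      intro n r; simp [hTdef]
    -- disjointness
    have hdisj : ∀ m ∈ Finset.Icc 1 N, ∀ n ∈ Finset.Icc 1 N, m ≠ n → Disjoint (T m) (T n) := by
      intro m hm n hn hmn
      simp only [Finset.mem_Icc] at hm hn
      rw [Finset.disjoint_left]
      intro r hrm hrn
      rw [hTmem] at hrm hrn
      have hmpos : 0 < m := hm.1
      have hnpos : 0 < n := hn.1
      have hne : (⟨m, hmpos⟩ : ℕ+) ≠ ⟨n, hnpos⟩ := by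
        intro h; exact hmn (congrArg (fun x : ℕ+ => (x : ℕ)) h)
      have hd := hk hne
      have h1 : (r:ℤ) ∈ netLevel k ⟨m, hmpos⟩ := by
        refine (mem_netLevel_iff _ _ _).mpr ?_
        simpa [hc'def, hmpos] using hrm.2
      have h2 : (r:ℤ) ∈ netLevel k ⟨n, hnpos⟩ := by
        refine (mem_netLevel_iff _ _ _).mpr ?_
        simpa [hc'def, hnpos] using hrn.2
      exact Set.disjoint_left.mp hd h1 h2
    -- cardinality of the union
    have hcardU : ((Finset.Icc 1 N).biUnion T).card = 2^N - 1 := by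
      rw [Finset.card_biUnion hdisj]
      rw [← sum_geom_Icc N]
      apply Finset.sum_congr rfl
      intro n hn
      simp only [Finset.mem_Icc] at hn
      exact card_filter_residue N n hn.2 (c' n)
    have hsub : (Finset.Icc 1 N).biUnion T ⊆ Finset.range (2^N) := by
      intro r hr
      simp only [Finset.mem_biUnion] at hr
      obtain ⟨n, _, hrn⟩ := hr
      rw [hTmem] at hrn
      exact Finset.mem_range.mpr hrn.1
    have hcardC : ((Finset.range (2^N)) \ (Finset.Icc 1 N).biUnion T).card = 1 := by
      rw [Finset.card_sdiff_of_subset hsub, hcardU, Finset.card_range]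
      have : 1 ≤ 2^N := Nat.one_le_two_pow
      omega
    -- the two residues
    have hresid : ∀ x : ℤ, (∀ n : ℕ+, x ∉ netLevel k n) →
        (x % 2^N).toNat ∈ (Finset.range (2^N)) \ (Finset.Icc 1 N).biUnion T := by
      intro x hx
      have hnn : (0:ℤ) ≤ x % 2^N := Int.emod_nonneg x (by positivity)
      have hcast : (((x % 2^N).toNat : ℤ)) = x % 2^N := Int.toNat_of_nonneg hnn
      have hlt : x % 2^N < 2^N := Int.emod_lt_of_pos x (by positivity)
      rw [Finset.mem_sdiff]
      have hcastN : ((2^N : ℕ) : ℤ) = (2:ℤ)^N := by push_cast; ring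
      constructor
      · rw [Finset.mem_range]
        omega
      · intro hmem
        simp only [Finset.mem_biUnion] at hmem
        obtain ⟨n, hn, hrn⟩ := hmem
        simp only [Finset.mem_Icc] at hn
        rw [hTmem] at hrn
        have hnpos : 0 < n := hn.1
        apply hx ⟨n, hnpos⟩
        refine (mem_netLevel_iff _ _ _).mpr ?_
        have h1 : (2:ℤ)^n ∣ x - x % 2^N := by
          have he : x - x % 2^N = 2^N * (x / 2^N) := by rw [Int.emod_def]; ring
          rw [he]
          exact Dvd.dvd.mul_right (pow_dvd_pow (2:ℤ) hn.2) _
        have h2 : (2:ℤ)^n ∣ x % 2^N - k ⟨n, hnpos⟩ := by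
          have := hrn.2
          rw [hcast] at this
          simpa [hc'def, hnpos] using this
        have := dvd_add h1 h2
        simpa using this
    have hri := hresid i hi
    have hrj := hresid j hj
    obtain ⟨a, ha⟩ := Finset.card_eq_one.mp hcardC
    rw [ha, Finset.mem_singleton] at hri hrj
    have heq : (i % 2^N).toNat = (j % 2^N).toNat := by rw [hri, hrj]
    have hnni : (0:ℤ) ≤ i % 2^N := Int.emod_nonneg i (by positivity)
    have hnnj : (0:ℤ) ≤ j % 2^N := Int.emod_nonneg j (by positivity)
    have hmodeq : i % 2^N = j % 2^N := by omega
    have h1 : (2:ℤ)^N ∣ i - i % 2^N := by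
      have he : i - i % 2^N = 2^N * (i / 2^N) := by rw [Int.emod_def]; ring
      rw [he]; exact Dvd.intro _ rfl
    have h2 : (2:ℤ)^N ∣ j - j % 2^N := by
      have he : j - j % 2^N = 2^N * (j / 2^N) := by rw [Int.emod_def]; ring
      rw [he]; exact Dvd.intro _ rfl
    have := dvd_sub h1 h2
    rw [hmodeq] at this
    simpa using this
  by_contra hne
  have hij : i - j ≠ 0 := sub_ne_zero.mpr hne
  have hpos : (0:ℤ) < |i - j| := abs_pos.mpr hij
  obtain ⟨N, hN⟩ : ∃ N, (i - j).natAbs < 2^N := ⟨(i-j).natAbs, Nat.lt_two_pow_self⟩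
  have hdvd : (2:ℤ)^N ∣ |i - j| := (dvd_abs _ _).mpr (key N)
  have hle : (2:ℤ)^N ≤ |i - j| := Int.le_of_dvd hpos hdvd
  have : |i - j| = ((i - j).natAbs : ℤ) := (Int.abs_eq_natAbs _)
  rw [this] at hle
  have : ((2:ℤ)^N) = ((2^N : ℕ) : ℤ) := by push_cast; ring
  omega
end

section
/- For any sequence α ∈ A^{ℕ₊} and any configuration x ∈ D_α (a Toeplitz configuration with respect to some 1-net), the frequency of each letter a ∈ A in x exists and equals Σ_{i : α_i = a} 2^{-i}. -/
/-- `D_α`: the Toeplitz configurations which are constantly `α n` on level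
`2^n ℤ + k n` of some 1-net. -/
def Dconf {A : Type*} (α : ℕ+ → A) : Set (ℤ → A) :=
  {x | ∃ k : ℕ+ → ℤ, IsOneNet k ∧ ∀ n : ℕ+, ∀ i ∈ netLevel k n, x i = α n}

lemma count_AP {m c lo hi : ℤ} (hm : 0 < m) (hlh : lo ≤ hi)
    (P : ℤ → Prop) [DecidablePred P] (hP : ∀ i, P i ↔ ∃ t : ℤ, i = m * t + c) :
    hi - lo + 1 - m ≤ m * (((Finset.Icc lo hi).filter P).card : ℤ) ∧
      m * (((Finset.Icc lo hi).filter P).card : ℤ) ≤ hi - lo + 1 + m := by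
  set A : ℤ := -((c - lo) / m) with hA
  set B : ℤ := (hi - c) / m with hB
  have himg : (Finset.Icc lo hi).filter P = (Finset.Icc A B).image (fun t => m * t + c) := by
    ext i
    simp only [Finset.mem_filter, Finset.mem_Icc, Finset.mem_image, hP]
    constructor
    · rintro ⟨⟨h1, h2⟩, t, rfl⟩
      refine ⟨t, ⟨?_, ?_⟩, rfl⟩
      · have h3 : -t * m ≤ c - lo := by linarith
        have h4 := (Int.le_ediv_iff_mul_le hm).mpr h3
        rw [hA]; linarith
      · rw [hB]
        exact (Int.le_ediv_iff_mul_le hm).mpr (by linarith)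
    · rintro ⟨t, ⟨hA', hB'⟩, rfl⟩
      have h1 : t * m ≤ hi - c := (Int.le_ediv_iff_mul_le hm).mp hB'
      have h2 : -t * m ≤ c - lo :=
        (Int.le_ediv_iff_mul_le hm).mp (by rw [hA] at hA'; linarith)
      exact ⟨⟨by linarith, by linarith⟩, t, rfl⟩
  have hinj : Function.Injective (fun t : ℤ => m * t + c) := by
    intro t1 t2 h
    simp only [add_left_inj] at h
    exact mul_left_cancel₀ hm.ne' h
  have hcard : ((Finset.Icc lo hi).filter P).card = (B + 1 - A).toNat := by
    rw [himg, Finset.card_image_of_injective _ hinj, Int.card_Icc]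
  rw [hcard]
  have e1 := Int.mul_ediv_add_emod (hi - c) m
  have r1 : 0 ≤ (hi - c) % m := Int.emod_nonneg _ hm.ne'
  have r1' : (hi - c) % m < m := Int.emod_lt_of_pos _ hm
  have e2 := Int.mul_ediv_add_emod (c - lo) m
  have r2 : 0 ≤ (c - lo) % m := Int.emod_nonneg _ hm.ne'
  have r2' : (c - lo) % m < m := Int.emod_lt_of_pos _ hm
  rcases le_or_gt 0 (B + 1 - A) with h | h
  · rw [Int.toNat_of_nonneg h]
    have hBe : m * B ≤ hi - c ∧ hi - c < m * B + m := by constructor <;> [linarith; linarith]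
    have hAe : m * (-A) ≤ c - lo ∧ c - lo < m * (-A) + m := by
      rw [hA, neg_neg]; constructor <;> [linarith; linarith]
    constructor <;> nlinarith [hBe.1, hBe.2, hAe.1, hAe.2]
  · rw [Int.toNat_of_nonpos h.le]
    have hn1 : B + 1 - A ≤ -1 := by omega
    have hmul : m * (B + 1 - A) ≤ m * (-1) := mul_le_mul_of_nonneg_left hn1 hm.le
    have hAe : m * (-A) ≤ c - lo ∧ c - lo < m * (-A) + m := by
      rw [hA, neg_neg]; constructor <;> [linarith; linarith]
    constructor <;> nlinarith [hAe.1, hAe.2]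

lemma hasSum_pnat_half : HasSum (fun n : ℕ+ => ((1:ℝ)/2) ^ (n : ℕ)) 1 := by
  have hg : HasSum (fun n : ℕ => ((1:ℝ)/2) ^ n) 2 := by
    have := hasSum_geometric_of_lt_one (r := (1:ℝ)/2) (by norm_num) (by norm_num)
    norm_num at this
    exact this
  have h0 : HasSum (fun n : ℕ => if n = 0 then (1:ℝ) else 0) 1 := hasSum_ite_eq 0 1
  have hf : HasSum (fun n : ℕ => if n = 0 then 0 else ((1:ℝ)/2) ^ n) 1 := by
    have := hg.sub h0
    norm_num at this
    convert this using 2 with n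
    · rfl
    by_cases h : n = 0 <;> simp [h]
  have hinj : Function.Injective (fun n : ℕ+ => (n : ℕ)) := fun a b h => PNat.coe_injective h
  have := (Function.Injective.hasSum_iff (f := fun n : ℕ => if n = 0 then 0 else ((1:ℝ)/2) ^ n)
    hinj ?_).mpr hf
  · convert this using 2 with n
    simp [Function.comp, n.ne_zero]
  · intro m hm
    have : m = 0 := by
      by_contra h
      exact hm ⟨⟨m, Nat.pos_of_ne_zero h⟩, rfl⟩
    simp [this]

lemma pnat_sum_Icc (g : ℕ+ → ℝ) (N : ℕ+) :
    ∑ n ∈ Finset.Icc 1 N, g n = ∑ j ∈ Finset.range (N : ℕ), g ⟨j + 1, j.succ_pos⟩ := by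
  refine Finset.sum_nbij' (fun n : ℕ+ => (n : ℕ) - 1)
    (fun m : ℕ => (⟨m + 1, m.succ_pos⟩ : ℕ+)) ?_ ?_ ?_ ?_ ?_
  · intro n hn
    simp only [Finset.mem_Icc] at hn
    simp only [Finset.mem_range]
    have h1 : 1 ≤ (n : ℕ) := n.one_le
    have h2 : (n : ℕ) ≤ (N : ℕ) := hn.2
    omega
  · intro m hm
    simp only [Finset.mem_range] at hm
    refine Finset.mem_Icc.mpr ?_
    constructor
    · exact PNat.one_le _
    · exact (PNat.coe_le_coe _ _).mp (Nat.succ_le_of_lt hm)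
  · intro n hn
    have h1 : 1 ≤ (n : ℕ) := n.one_le
    apply PNat.coe_injective
    simp only [PNat.mk_coe]
    omega
  · intro m hm
    simp
  · intro n hn
    have h1 : 1 ≤ (n : ℕ) := n.one_le
    congr 1
    apply PNat.coe_injective
    simp only [PNat.mk_coe]
    omega

lemma pnat_geom_partial (N : ℕ+) :
    ∑ n ∈ Finset.Icc (1:ℕ+) N, ((1:ℝ)/2) ^ (n : ℕ) = 1 - ((1:ℝ)/2) ^ (N : ℕ) := by
  rw [pnat_sum_Icc]
  have heq : ∑ j ∈ Finset.range (N:ℕ), ((1:ℝ)/2) ^ (((⟨j+1, j.succ_pos⟩ : ℕ+)) : ℕ)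
      = ∑ j ∈ Finset.range (N:ℕ), ((1:ℝ)/2) * ((1:ℝ)/2) ^ j := by
    apply Finset.sum_congr rfl
    intro j _
    rw [show (((⟨j+1, j.succ_pos⟩ : ℕ+)) : ℕ) = j + 1 from rfl, pow_succ]
    ring
  refine heq.trans ?_
  rw [← Finset.mul_sum, geom_sum_eq (by norm_num)]
  field_simp
  ring

/-- In any configuration of `D_α`, each letter `a` has a frequency,
equal to `Σ_{i : α_i = a} 2^{-i}`. -/
theorem frequency_in_Dconf {A : Type*} [Fintype A] [DecidableEq A]
    (α : ℕ+ → A) (x : ℤ → A) (hx : x ∈ Dconf α) (a : A) :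
    Filter.Tendsto
      (fun r : ℕ =>
        (((Finset.Icc (-(r : ℤ)) (r : ℤ)).filter fun i => x i = a).card : ℝ) /
          (2 * (r : ℝ) + 1))
      Filter.atTop
      (nhds (∑' i : ℕ+, if α i = a then ((1 : ℝ) / 2) ^ (i : ℕ) else 0)) := by
  classical
  obtain ⟨k, hk, hxk⟩ := hx
  set f : ℕ+ → ℝ := fun i => if α i = a then ((1 : ℝ) / 2) ^ (i : ℕ) else 0 with hfdef
  have hf_nonneg : ∀ i, 0 ≤ f i := by
    intro i; simp only [hfdef]; split <;> positivity
  have hf_le : ∀ i : ℕ+, f i ≤ ((1:ℝ)/2) ^ (i : ℕ) := by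
    intro i; simp only [hfdef]; split
    · exact le_rfl
    · positivity
  have hh := hasSum_pnat_half
  have hsummable : Summable f := Summable.of_nonneg_of_le hf_nonneg hf_le hh.summable
  rw [Metric.tendsto_atTop]
  intro ε hε
  obtain ⟨N0, hN0⟩ := exists_pow_lt_of_lt_one (half_pos hε) (show (1:ℝ)/2 < 1 by norm_num)
  set N : ℕ+ := ⟨N0 + 1, N0.succ_pos⟩ with hNdef
  have hNco : (N : ℕ) = N0 + 1 := rfl
  have hNpow : ((1:ℝ)/2) ^ (N : ℕ) < ε / 2 := by
    rw [hNco, pow_succ]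
    have h1 : (0:ℝ) < ((1:ℝ)/2) ^ N0 := by positivity
    nlinarith
  set F : Finset ℕ+ := Finset.Icc 1 N with hF
  set CN : ℝ := (F.card : ℝ) with hCN
  have hCN0 : (0:ℝ) ≤ CN := by positivity
  have hpartial : ∑ n ∈ F, ((1:ℝ)/2) ^ (n : ℕ) = 1 - ((1:ℝ)/2) ^ (N : ℕ) :=
    pnat_geom_partial N
  -- tail bounds on the tsum
  set S : ℝ := ∑' i, f i with hS
  set SN : ℝ := ∑ i ∈ F, f i with hSN
  have hcompl_f := Summable.sum_add_tsum_compl (s := F) hsummable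
  have hcompl_h := Summable.sum_add_tsum_compl (s := F) hh.summable
  have htail1 : (0:ℝ) ≤ ∑' i : ((F : Set ℕ+)ᶜ : Set ℕ+), f i :=
    tsum_nonneg (fun i => hf_nonneg i)
  have htail2 : ∑' i : ((F : Set ℕ+)ᶜ : Set ℕ+), f i
      ≤ ∑' i : ((F : Set ℕ+)ᶜ : Set ℕ+), ((1:ℝ)/2) ^ ((i : ℕ+) : ℕ) :=
    Summable.tsum_le_tsum (fun i => hf_le i) (hsummable.subtype _) (hh.summable.subtype _)
  have hcomph_val : ∑' i : ((F : Set ℕ+)ᶜ : Set ℕ+), ((1:ℝ)/2) ^ ((i : ℕ+) : ℕ)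
      = ((1:ℝ)/2) ^ (N : ℕ) := by
    have h := hcompl_h
    rw [hh.tsum_eq, hpartial] at h
    linarith
  have hS_low : SN ≤ S := by
    rw [hS, ← hcompl_f]; linarith
  have hS_up : S ≤ SN + ((1:ℝ)/2) ^ (N : ℕ) := by
    rw [hS, ← hcompl_f]
    have := htail2.trans_eq hcomph_val
    linarith
  -- choose the threshold
  obtain ⟨R, hR⟩ := exists_nat_gt ((4 * CN) / ε)
  refine ⟨R, fun r hr => ?_⟩
  have h2r : (0:ℝ) < 2 * (r:ℝ) + 1 := by positivity
  have hRr : 2 * CN < (2 * (r:ℝ) + 1) * (ε / 2) := by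
    have h1 : 4 * CN < (R:ℝ) * ε := by
      have := (div_lt_iff₀ hε).mp hR
      linarith
    have h2 : (R:ℝ) * ε ≤ (r:ℝ) * ε :=
      mul_le_mul_of_nonneg_right (by exact_mod_cast hr) hε.le
    nlinarith
  -- the window and its cardinality
  set W : Finset ℤ := Finset.Icc (-(r:ℤ)) (r:ℤ) with hW
  have hWcard : (W.card : ℝ) = 2 * (r:ℝ) + 1 := by
    rw [hW, Int.card_Icc]
    have h1 : ((r:ℤ) + 1 - -(r:ℤ)).toNat = 2 * r + 1 := by omega
    rw [h1]; push_cast; ring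
  -- per-level counting
  set cn : ℕ+ → ℕ := fun n => (W.filter (fun i => i ∈ netLevel k n)).card with hcn
  have hcount : ∀ n : ℕ+,
      (2 * (r:ℝ) + 1) * ((1:ℝ)/2) ^ (n : ℕ) - 1 ≤ (cn n : ℝ)
      ∧ (cn n : ℝ) ≤ (2 * (r:ℝ) + 1) * ((1:ℝ)/2) ^ (n : ℕ) + 1 := by
    intro n
    have hm : (0:ℤ) < 2 ^ (n:ℕ) := by positivity
    have hlh : -(r:ℤ) ≤ (r:ℤ) := by omega
    obtain ⟨hl, hu⟩ := count_AP (c := k n) hm hlh (fun i => i ∈ netLevel k n)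
      (fun i => Iff.rfl)
    have hp : (0:ℝ) < 2 ^ (n:ℕ) := by positivity
    have hlr : (r:ℝ) - (-(r:ℝ)) + 1 - 2 ^ (n:ℕ) ≤ 2 ^ (n:ℕ) * (cn n : ℝ) := by
      exact_mod_cast hl
    have hur : 2 ^ (n:ℕ) * (cn n : ℝ) ≤ (r:ℝ) - (-(r:ℝ)) + 1 + 2 ^ (n:ℕ) := by
      exact_mod_cast hu
    have hhalf : ((1:ℝ)/2) ^ (n:ℕ) = 1 / 2 ^ (n:ℕ) := by
      rw [div_pow]; norm_num
    rw [hhalf, mul_one_div]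
    constructor
    · rw [sub_le_iff_le_add, div_le_iff₀ hp]
      linarith
    · rw [← sub_le_iff_le_add, le_div_iff₀ hp]
      linarith
  -- disjointness of filtered levels
  have hdisj : ∀ m ∈ F, ∀ n ∈ F, m ≠ n →
      Disjoint (W.filter (fun i => i ∈ netLevel k m)) (W.filter (fun i => i ∈ netLevel k n)) := by
    intro m _ n _ hmn
    rw [Finset.disjoint_left]
    intro i hi1 hi2
    simp only [Finset.mem_filter] at hi1 hi2
    exact Set.disjoint_left.mp (hk hmn) hi1.2 hi2.2
  have hsumF : ∑ n ∈ F, cn n ≤ W.card := by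
    rw [hcn, ← Finset.card_biUnion hdisj]
    apply Finset.card_le_card
    intro i hi
    simp only [Finset.mem_biUnion] at hi
    obtain ⟨n, _, hn⟩ := hi
    exact (Finset.mem_filter.mp hn).1
  set Fa : Finset ℕ+ := F.filter (fun n => α n = a) with hFa
  set Fb : Finset ℕ+ := F.filter (fun n => ¬ α n = a) with hFb
  -- lower bound on the count of `a`
  have hlow : ∑ n ∈ Fa, cn n ≤ (W.filter (fun i => x i = a)).card := by
    rw [hcn, ← Finset.card_biUnion
      (fun m hm n hn h => hdisj m (Finset.mem_of_mem_filter m hm)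
        n (Finset.mem_of_mem_filter n hn) h)]
    apply Finset.card_le_card
    intro i hi
    simp only [Finset.mem_biUnion, Finset.mem_filter] at hi ⊢
    obtain ⟨n, hn, hi1, hi2⟩ := hi
    refine ⟨hi1, ?_⟩
    rw [hxk n i hi2]
    exact hn.2
  -- upper bound
  have hupp : (W.filter (fun i => x i = a)).card + ∑ n ∈ Fb, cn n ≤ W.card := by
    rw [hcn, ← Finset.card_biUnion
      (fun m hm n hn h => hdisj m (Finset.mem_of_mem_filter m hm)
        n (Finset.mem_of_mem_filter n hn) h)]
    have hdisj2 : Disjoint (W.filter (fun i => x i = a))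
        (Fb.biUnion (fun n => W.filter (fun i => i ∈ netLevel k n))) := by
      rw [Finset.disjoint_left]
      intro i hi1 hi2
      simp only [Finset.mem_filter] at hi1
      simp only [Finset.mem_biUnion, Finset.mem_filter] at hi2
      obtain ⟨n, hn, _, hi3⟩ := hi2
      have := hxk n i hi3
      have hna := (Finset.mem_filter.mp hn).2
      rw [hi1.2] at this
      exact hna this.symm
    rw [← Finset.card_union_of_disjoint hdisj2]
    apply Finset.card_le_card
    intro i hi
    simp only [Finset.mem_union, Finset.mem_filter, Finset.mem_biUnion] at hi
    rcases hi with h | ⟨n, _, h, _⟩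
    · exact h.1
    · exact h
  -- real versions
  set cA : ℝ := ((W.filter (fun i => x i = a)).card : ℝ) with hcA
  have hsumF' : ∑ n ∈ F, (cn n : ℝ) ≤ 2 * (r:ℝ) + 1 := by
    rw [← hWcard]; exact_mod_cast hsumF
  have hlow' : ∑ n ∈ Fa, (cn n : ℝ) ≤ cA := by
    rw [hcA]; exact_mod_cast hlow
  have hupp' : cA + ∑ n ∈ Fb, (cn n : ℝ) ≤ 2 * (r:ℝ) + 1 := by
    rw [← hWcard, hcA]; exact_mod_cast hupp
  have hsplit : ∑ n ∈ Fa, (cn n : ℝ) + ∑ n ∈ Fb, (cn n : ℝ) = ∑ n ∈ F, (cn n : ℝ) :=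
    Finset.sum_filter_add_sum_filter_not F _ _
  have hSN_eq : ∑ n ∈ Fa, ((1:ℝ)/2) ^ (n : ℕ) = SN := by
    simp only [hSN, hfdef, hFa, Finset.sum_filter]
  have hFacard : (Fa.card : ℝ) ≤ CN := by
    rw [hCN]; exact_mod_cast Finset.card_filter_le F _
  -- sum bounds
  have hFa_low : (2*(r:ℝ)+1) * SN - CN ≤ ∑ n ∈ Fa, (cn n : ℝ) := by
    have h1 : ∑ n ∈ Fa, ((2*(r:ℝ)+1) * ((1:ℝ)/2)^(n:ℕ) - 1) ≤ ∑ n ∈ Fa, (cn n : ℝ) :=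
      Finset.sum_le_sum (fun n _ => (hcount n).1)
    have h2 : ∑ n ∈ Fa, ((2*(r:ℝ)+1) * ((1:ℝ)/2)^(n:ℕ) - 1)
        = (2*(r:ℝ)+1) * SN - Fa.card := by
      rw [Finset.sum_sub_distrib, ← Finset.mul_sum, hSN_eq]
      simp
    rw [h2] at h1
    linarith
  have hFa_up : ∑ n ∈ Fa, (cn n : ℝ) ≤ (2*(r:ℝ)+1) * SN + CN := by
    have h1 : ∑ n ∈ Fa, (cn n : ℝ) ≤ ∑ n ∈ Fa, ((2*(r:ℝ)+1) * ((1:ℝ)/2)^(n:ℕ) + 1) :=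
      Finset.sum_le_sum (fun n _ => (hcount n).2)
    have h2 : ∑ n ∈ Fa, ((2*(r:ℝ)+1) * ((1:ℝ)/2)^(n:ℕ) + 1)
        = (2*(r:ℝ)+1) * SN + Fa.card := by
      rw [Finset.sum_add_distrib, ← Finset.mul_sum, hSN_eq]
      simp
    rw [h2] at h1
    linarith
  have hF_low : (2*(r:ℝ)+1) * (1 - ((1:ℝ)/2)^(N:ℕ)) - CN ≤ ∑ n ∈ F, (cn n : ℝ) := by
    have h1 : ∑ n ∈ F, ((2*(r:ℝ)+1) * ((1:ℝ)/2)^(n:ℕ) - 1) ≤ ∑ n ∈ F, (cn n : ℝ) :=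
      Finset.sum_le_sum (fun n _ => (hcount n).1)
    have h2 : ∑ n ∈ F, ((2*(r:ℝ)+1) * ((1:ℝ)/2)^(n:ℕ) - 1)
        = (2*(r:ℝ)+1) * (1 - ((1:ℝ)/2)^(N:ℕ)) - CN := by
      rw [Finset.sum_sub_distrib, ← Finset.mul_sum, hpartial, hCN]
      simp
    rw [h2] at h1
    exact h1
  -- final bounds on cA
  have hcA_low : (2*(r:ℝ)+1) * SN - CN ≤ cA := le_trans hFa_low hlow'
  have hcA_up : cA ≤ (2*(r:ℝ)+1) * SN + (2*(r:ℝ)+1) * ((1:ℝ)/2)^(N:ℕ) + 2 * CN := by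
    linarith [hupp', hsplit, hF_low, hFa_up]
  -- conclude
  have hp1 : (2*(r:ℝ)+1) * SN ≤ (2*(r:ℝ)+1) * S := mul_le_mul_of_nonneg_left hS_low h2r.le
  have hp2 : (2*(r:ℝ)+1) * ((1:ℝ)/2)^(N:ℕ) ≤ (2*(r:ℝ)+1) * (ε/2) :=
    mul_le_mul_of_nonneg_left hNpow.le h2r.le
  have hq1 : (2*(r:ℝ)+1) * (S - ((1:ℝ)/2)^(N:ℕ)) ≤ (2*(r:ℝ)+1) * SN :=
    mul_le_mul_of_nonneg_left (by linarith) h2r.le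
  have hup : cA / (2*(r:ℝ)+1) < S + ε := by
    rw [div_lt_iff₀ h2r]
    linarith [hp1, hp2, hRr, hcA_up]
  have hdown : S - ε < cA / (2*(r:ℝ)+1) := by
    rw [lt_div_iff₀ h2r]
    linarith [hq1, hp2, hcA_low, hRr, mul_pos h2r hε]
  rw [Real.dist_eq, abs_lt]
  constructor
  · linarith
  · linarith
end

section
/- Let α ∈ A^{ℕ₊}, x ∈ D_α, j ∈ ℤ, and let i be an odd positive integer. Then the configuration y defined by y_m = x_{im+j} belongs to D_α. -/
/-- Reading a configuration of `D_α` along an arithmetic progression `i ℤ + j`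
with `i` odd and positive again yields a configuration of `D_α`. -/
theorem Dconf_odd_subprogression {A : Type*} (α : ℕ+ → A) (x : ℤ → A)
    (hx : x ∈ Dconf α) (j i : ℤ) (hodd : Odd i) (hpos : 0 < i) :
    (fun m : ℤ => x (i * m + j)) ∈ Dconf α := by
  obtain ⟨k, hnet, hk⟩ := hx
  have hcop : ∀ n : ℕ+, IsCoprime i ((2 : ℤ) ^ (n : ℕ)) := by
    intro n
    refine IsCoprime.pow_right ?_
    refine ((Int.prime_two.coprime_iff_not_dvd).mpr ?_).symm
    intro h2
    obtain ⟨r, hr⟩ := hodd; obtain ⟨s, hs⟩ := h2; omega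
  have key : ∀ n : ℕ+, ∃ c : ℤ, ∃ t : ℤ, i * c + j = 2 ^ (n : ℕ) * t + k n := by
    intro n
    obtain ⟨u, v, huv⟩ := hcop n
    exact ⟨u * (k n - j), -v * (k n - j), by linear_combination (k n - j) * huv⟩
  choose c t hct using key
  have hmap : ∀ n : ℕ+, ∀ m ∈ netLevel c n, i * m + j ∈ netLevel k n := by
    rintro n m ⟨s, hs⟩
    exact ⟨i * s + t n, by rw [hs]; linear_combination hct n⟩
  refine ⟨c, ?_, ?_⟩
  · intro a b hab
    rw [Set.disjoint_left]
    intro m hma hmb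
    exact Set.disjoint_left.mp (hnet hab) (hmap a m hma) (hmap b m hmb)
  · intro n m hm
    exact hk n (i * m + j) (hmap n m hm)
end

section
/- For any letter a ∈ A, any α ∈ A^{ℕ₊}, any x ∈ D_α and any n ∈ ℕ, the number of occurrences of a in the word x|_{[0,2^n)} differs from Σ_{j ≤ n, α_j = a} 2^{n-j} by at most 1. -/


lemma card_pow_filter {n m : ℕ} (h : m ≤ n) (c : ℤ) :
    ((Finset.Ico (0:ℤ) (2^n)).filter (fun i => (2:ℤ)^m ∣ (i - c))).card = 2^(n-m) := by
  have hpos : (0:ℤ) < 2^m := by positivity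
  have hpow : (2:ℤ)^m * 2^(n-m) = 2^n := by
    rw [← pow_add]; congr 1; omega
  have himg : (Finset.Ico (0:ℤ) (2^n)).filter (fun i => (2:ℤ)^m ∣ (i - c))
      = (Finset.Ico (0:ℤ) (2^(n-m))).image (fun t => 2^m * t + c % 2^m) := by
    ext i
    simp only [Finset.mem_filter, Finset.mem_image, Finset.mem_Ico]
    constructor
    · rintro ⟨⟨h0, h1⟩, hd⟩
      have hmod : i % 2^m = c % 2^m := Int.ModEq.symm (Int.modEq_iff_dvd.mpr hd)
      have hdm := Int.mul_ediv_add_emod i (2^m)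
      refine ⟨i / 2^m, ⟨Int.ediv_nonneg h0 hpos.le, ?_⟩, by linarith⟩
      rw [Int.ediv_lt_iff_lt_mul hpos]
      calc i < 2^n := h1
        _ = 2^(n-m) * 2^m := by rw [mul_comm]; exact hpow.symm
    · rintro ⟨t, ⟨ht0, ht1⟩, rfl⟩
      have hm0 : 0 ≤ c % 2^m := Int.emod_nonneg c (ne_of_gt hpos)
      have hm1 : c % 2^m < 2^m := Int.emod_lt_of_pos c hpos
      have hdm := Int.mul_ediv_add_emod c (2^m)
      refine ⟨⟨by positivity, ?_⟩, ⟨t - c / 2^m, by ring_nf; linarith⟩⟩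
      have : (2:ℤ)^m * (t + 1) ≤ 2^m * 2^(n-m) := by
        apply mul_le_mul_of_nonneg_left (by omega) hpos.le
      calc (2:ℤ)^m * t + c % 2^m < 2^m * (t+1) := by ring_nf; linarith
        _ ≤ 2^n := by rw [← hpow]; exact this
  rw [himg, Finset.card_image_of_injective _ (fun t1 t2 ht => by
    simp only [add_left_inj] at ht
    exact mul_left_cancel₀ (ne_of_gt hpos) ht)]
  rw [Int.card_Ico, sub_zero]
  rw [show ((2:ℤ)^(n-m)) = ((2^(n-m) : ℕ) : ℤ) by push_cast; ring, Int.toNat_natCast]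

lemma geo_sum (N : ℕ) : ∑ j ∈ Finset.range N, 2^j = 2^N - 1 := by
  induction N with
  | zero => simp
  | succ N ih =>
    have h1 : 1 ≤ 2^N := Nat.one_le_two_pow
    rw [Finset.sum_range_succ, ih, pow_succ]
    omega

/-- The number of occurrences of `a` in `x|_{[0,2^n)}`, for `x ∈ D_α`, differs from
`Σ_{1 ≤ j ≤ n, α_j = a} 2^(n-j)` by at most `1`. -/
theorem occurrences_close_to_sum {A : Type*} [DecidableEq A] (α : ℕ+ → A)
    (x : ℤ → A) (hx : x ∈ Dconf α) (a : A) (n : ℕ) :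
    |((((Finset.Ico (0 : ℤ) (2 ^ n)).filter fun i => x i = a).card : ℤ) -
        ∑ j ∈ Finset.range n,
          if α ⟨j + 1, Nat.succ_pos j⟩ = a then (2 : ℤ) ^ (n - (j + 1)) else 0)| ≤ 1 := by
  obtain ⟨k, hnet, hconst⟩ := hx
  set I := Finset.Ico (0:ℤ) (2^n) with hI
  set F := I.filter (fun i => x i = a) with hF
  set S : ℕ → Finset ℤ :=
    fun j => I.filter (fun i => (2:ℤ)^(j+1) ∣ (i - k ⟨j+1, Nat.succ_pos j⟩)) with hS
  have hSnet : ∀ j, ∀ i ∈ S j, i ∈ netLevel k ⟨j+1, Nat.succ_pos j⟩ := by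
    intro j i hi
    obtain ⟨t, ht⟩ := (Finset.mem_filter.mp hi).2
    refine ⟨t, ?_⟩
    show i = 2^(j+1) * t + k ⟨j+1, Nat.succ_pos j⟩
    linarith
  have hdisj : ∀ j ∈ Finset.range n, ∀ j' ∈ Finset.range n, j ≠ j' →
      Disjoint (S j) (S j') := by
    intro j _ j' _ hjj'
    have hne : (⟨j+1, Nat.succ_pos j⟩ : ℕ+) ≠ ⟨j'+1, Nat.succ_pos j'⟩ := by
      intro h
      have : j + 1 = j' + 1 := congrArg (fun p : ℕ+ => (p : ℕ)) h
      omega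
    have h := hnet hne
    exact Finset.disjoint_left.mpr fun i hi hi' =>
      (Set.disjoint_left.mp h (hSnet j i hi)) (hSnet j' i hi')
  have hcard : ∀ j ∈ Finset.range n, (S j).card = 2^(n-(j+1)) := by
    intro j hj
    exact card_pow_filter (by simpa using Finset.mem_range.mp hj) _
  have hxS : ∀ j, ∀ i ∈ S j, x i = α ⟨j+1, Nat.succ_pos j⟩ :=
    fun j i hi => hconst _ i (hSnet j i hi)
  set U := (Finset.range n).biUnion S with hU
  have hUI : U ⊆ I := Finset.biUnion_subset.mpr fun j _ => Finset.filter_subset _ _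
  have hUcard : U.card = 2^n - 1 := by
    rw [Finset.card_biUnion hdisj, Finset.sum_congr rfl hcard]
    calc ∑ j ∈ Finset.range n, 2^(n-(j+1))
        = ∑ j ∈ Finset.range n, 2^(n-1-j) := by
          apply Finset.sum_congr rfl; intro j hj; congr 1; omega
      _ = ∑ j ∈ Finset.range n, 2^j := Finset.sum_range_reflect (fun j => 2^j) n
      _ = 2^n - 1 := geo_sum n
  -- F ∩ S j
  have hFS : ∀ j ∈ Finset.range n,
      ((F ∩ S j).card : ℤ) =
        if α ⟨j+1, Nat.succ_pos j⟩ = a then (2:ℤ)^(n-(j+1)) else 0 := by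
    intro j hj
    have hinter : F ∩ S j = (S j).filter (fun i => x i = a) := by
      ext i
      simp only [Finset.mem_inter, hF, Finset.mem_filter]
      constructor
      · rintro ⟨⟨_, hxa⟩, hs⟩; exact ⟨hs, hxa⟩
      · rintro ⟨hs, hxa⟩; exact ⟨⟨(Finset.mem_filter.mp hs).1, hxa⟩, hs⟩
    rw [hinter]
    by_cases hα : α ⟨j+1, Nat.succ_pos j⟩ = a
    · rw [if_pos hα]
      have : (S j).filter (fun i => x i = a) = S j := by
        apply Finset.filter_true_of_mem
        intro i hi; rw [hxS j i hi, hα]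
      rw [this, hcard j hj]
      push_cast; ring
    · rw [if_neg hα]
      have : (S j).filter (fun i => x i = a) = ∅ := by
        apply Finset.filter_false_of_mem
        intro i hi hxa
        exact hα (by rw [← hxS j i hi, hxa])
      rw [this]; simp
  -- decomposition
  have hFdecomp : F.card = (∑ j ∈ Finset.range n, (F ∩ S j).card) + (F \ U).card := by
    have h1 : F = (F ∩ U) ∪ (F \ U) := by
      rw [Finset.union_comm, Finset.sdiff_union_inter]
    have h2 : Disjoint (F ∩ U) (F \ U) :=
      Finset.disjoint_left.mpr fun i hi hi' =>
        (Finset.mem_sdiff.mp hi').2 (Finset.mem_inter.mp hi).2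
    have h3 : F ∩ U = (Finset.range n).biUnion (fun j => F ∩ S j) := by
      rw [hU, Finset.inter_biUnion]
    have hcardFU : (F ∩ U).card = ∑ j ∈ Finset.range n, (F ∩ S j).card := by
      rw [h3, Finset.card_biUnion]
      intro j hj j' hj' hne
      exact Finset.disjoint_left.mpr fun i hi hi' =>
        Finset.disjoint_left.mp (hdisj j hj j' hj' hne)
          (Finset.mem_inter.mp hi).2 (Finset.mem_inter.mp hi').2
    have hcardF : F.card = (F ∩ U).card + (F \ U).card := by
      rw [← Finset.card_union_of_disjoint h2, ← h1]
    rw [hcardF, hcardFU]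
  have hIcard : I.card = 2^n := by
    rw [hI, Int.card_Ico, sub_zero,
      show ((2:ℤ)^n) = ((2^n : ℕ) : ℤ) by push_cast; ring, Int.toNat_natCast]
  have hrem : (F \ U).card ≤ 1 := by
    have h1 : F \ U ⊆ I \ U := by
      apply Finset.sdiff_subset_sdiff (Finset.filter_subset _ _) (le_refl _)
    have h2 : (I \ U).card = 1 := by
      rw [Finset.card_sdiff_of_subset hUI, hIcard, hUcard]
      have : 1 ≤ 2^n := Nat.one_le_two_pow
      omega
    calc (F \ U).card ≤ (I \ U).card := Finset.card_le_card h1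
      _ = 1 := h2
  -- conclude
  have hsum : ∑ j ∈ Finset.range n,
      (if α ⟨j + 1, Nat.succ_pos j⟩ = a then (2 : ℤ) ^ (n - (j + 1)) else 0)
      = ∑ j ∈ Finset.range n, ((F ∩ S j).card : ℤ) :=
    Finset.sum_congr rfl fun j hj => (hFS j hj).symm
  have hmain : ((F.card : ℤ)) -
      (∑ j ∈ Finset.range n,
        if α ⟨j + 1, Nat.succ_pos j⟩ = a then (2 : ℤ) ^ (n - (j + 1)) else 0)
      = ((F \ U).card : ℤ) := by
    rw [hsum, hFdecomp]
    push_cast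
    ring
  rw [hmain]
  rw [abs_le]
  constructor
  · have : (0:ℤ) ≤ ((F \ U).card : ℤ) := Int.natCast_nonneg _
    linarith
  · exact_mod_cast hrem
end

section
/- If a 2D SFT N letter-factors onto itself after a 2×2 block recoding (i.e., N 0-simulates itself injectively with parameters 2, 2), then the directional entropy of N in the vertical direction is 0. -/
open Filter

/-- The shift by a vector `v ∈ ℤ²` on two-dimensional configurations. -/
def shift2 {A : Type*} (v : ℤ × ℤ) (x : ℤ × ℤ → A) : ℤ × ℤ → A :=
  fun p => x (p.1 + v.1, p.2 + v.2)

/-- The `B × T` block recoding of a configuration: the macro-cell at position `p`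
carries the `B × T` rectangle of `x` based at `(p.1 * B, p.2 * T)`. -/
def block {A : Type*} (B T : ℕ) (x : ℤ × ℤ → A) : ℤ × ℤ → (Fin B × Fin T → A) :=
  fun p q => x (p.1 * (B : ℤ) + (q.1 : ℤ), p.2 * (T : ℤ) + (q.2 : ℤ))

/-- The patterns of `X` on the rectangle `[0,k) × [0,r)`. -/
def patt {A : Type*} (X : Set (ℤ × ℤ → A)) (k r : ℕ) : Set (Fin k × Fin r → A) :=
  {u | ∃ x ∈ X, ∀ q : Fin k × Fin r, u q = x ((q.1 : ℤ), (q.2 : ℤ))}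

/-- `N_{k,r}(X)`: the number of patterns of `X` on the rectangle `[0,k) × [0,r)`. -/
noncomputable def Npat {A : Type*} (X : Set (ℤ × ℤ → A)) (k r : ℕ) : ℕ :=
  (patt X k r).ncard

/-- `X` `l`-simulates `Y` with parameters `B, T`: there are `Z ⊆ X` and a letter
projection `π` such that `X` is the union of the `B × T` translates of `Z`, the
`B × T` block recoding of `Z` letter-factors onto `Y` via `π`, and the projected
letters of `2l+1` horizontally consecutive rectangles determine the central one. -/
def LSimulates {A C : Type*} (X : Set (ℤ × ℤ → A)) (Y : Set (ℤ × ℤ → C))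
    (l B T : ℕ) : Prop :=
  ∃ Z ⊆ X, ∃ π : (Fin B × Fin T → A) → C,
    (X = ⋃ i : Fin B, ⋃ j : Fin T, shift2 ((i : ℤ), (j : ℤ)) '' Z) ∧
    ((fun x : ℤ × ℤ → A => fun p : ℤ × ℤ => π (block B T x p)) '' Z = Y) ∧
    (∀ x ∈ Z, ∀ x' ∈ Z, ∀ p : ℤ × ℤ,
      (∀ d : ℤ, |d| ≤ (l : ℤ) →
        π (block B T x (p.1 + d, p.2)) = π (block B T x' (p.1 + d, p.2))) →
      block B T x p = block B T x' p)

/-- `h` is the directional entropy of `X` in the vertical direction `e₂`: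
`h = lim_{k → ∞} lim_{r → ∞} log N_{k,r}(X) / r`. -/
def HasDirEntV {A : Type*} (X : Set (ℤ × ℤ → A)) (h : ℝ) : Prop :=
  ∃ g : ℕ → ℝ,
    (∀ k : ℕ, Tendsto (fun r : ℕ => Real.log (Npat X k r : ℝ) / (r : ℝ))
      atTop (nhds (g k))) ∧
    Tendsto g atTop (nhds h)

/-- `h` is the directional entropy of `X` in the horizontal direction `e₁`:
`h = lim_{k → ∞} lim_{r → ∞} log N_{r,k}(X) / r`. -/
def HasDirEntH {A : Type*} (X : Set (ℤ × ℤ → A)) (h : ℝ) : Prop :=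
  ∃ g : ℕ → ℝ,
    (∀ k : ℕ, Tendsto (fun r : ℕ => Real.log (Npat X r k : ℝ) / (r : ℝ))
      atTop (nhds (g k))) ∧
    Tendsto g atTop (nhds h)

/-- `X` `l`-simulates `Y` injectively: as `LSimulates`, and moreover the block
recoding map is injective on `Z`. -/
def LSimulatesInj {A C : Type*} (X : Set (ℤ × ℤ → A)) (Y : Set (ℤ × ℤ → C))
    (l B T : ℕ) : Prop :=
  ∃ Z ⊆ X, ∃ π : (Fin B × Fin T → A) → C,
    (X = ⋃ i : Fin B, ⋃ j : Fin T, shift2 ((i : ℤ), (j : ℤ)) '' Z) ∧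
    ((fun x : ℤ × ℤ → A => fun p : ℤ × ℤ => π (block B T x p)) '' Z = Y) ∧
    (∀ x ∈ Z, ∀ x' ∈ Z, ∀ p : ℤ × ℤ,
      (∀ d : ℤ, |d| ≤ (l : ℤ) →
        π (block B T x (p.1 + d, p.2)) = π (block B T x' (p.1 + d, p.2))) →
      block B T x p = block B T x' p) ∧
    Set.InjOn (fun x : ℤ × ℤ → A => fun p : ℤ × ℤ => π (block B T x p)) Z

lemma SS_prod_ncard {B : Type*} [Finite B] (s : Set B) :
    ((Set.univ : Set (Fin 2 × Fin 2)) ×ˢ s).ncard = 4 * s.ncard := by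
  rw [← Nat.card_coe_set_eq, Nat.card_congr (Equiv.Set.prod _ _), Nat.card_prod,
    Nat.card_coe_set_eq, Nat.card_coe_set_eq, Set.ncard_univ]
  simp [Nat.card_eq_fintype_card]

lemma SS_stepMono {A : Type*} [Finite A] [Nonempty A] (Z : Set (ℤ × ℤ → A))
    {k r k' r' : ℕ} (hk : k ≤ k') (hr : r ≤ r') :
    (patt Z k r).ncard ≤ (patt Z k' r').ncard := by
  have hch : ∀ u ∈ patt Z k r, ∃ z ∈ Z, ∀ q : Fin k × Fin r, u q = z ((q.1 : ℤ), (q.2 : ℤ)) :=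
    fun u hu => hu
  choose! zf hzf hval using hch
  apply Set.ncard_le_ncard_of_injOn
    (fun u => fun q : Fin k' × Fin r' => zf u ((q.1 : ℤ), (q.2 : ℤ)))
  · intro u hu
    exact ⟨zf u, hzf u hu, fun q => rfl⟩
  · intro u hu u' hu' hF
    funext q
    have h1 := congrFun hF (Fin.castLE hk q.1, Fin.castLE hr q.2)
    simp only [Fin.coe_castLE] at h1
    rw [hval u hu q, hval u' hu' q]
    exact h1

lemma SS_stepA {A : Type*} [Finite A] [Nonempty A] {N Z : Set (ℤ × ℤ → A)}
    (hcover : N = ⋃ i : Fin 2, ⋃ j : Fin 2, shift2 ((i : ℤ), (j : ℤ)) '' Z) (k r : ℕ) :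
    Npat N k r ≤ 4 * (patt Z (k + 1) (r + 1)).ncard := by
  have hch : ∀ u ∈ patt N k r, ∃ p : Fin 2 × Fin 2, ∃ z ∈ Z,
      ∀ q : Fin k × Fin r, u q = z ((q.1 : ℤ) + (p.1 : ℤ), (q.2 : ℤ) + (p.2 : ℤ)) := by
    intro u hu
    obtain ⟨x, hxN, hux⟩ := hu
    rw [hcover] at hxN
    simp only [Set.mem_iUnion, Set.mem_image] at hxN
    obtain ⟨i, j, z, hz, hxz⟩ := hxN
    refine ⟨(i, j), z, hz, fun q => ?_⟩
    rw [hux q, ← hxz]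
    rfl
  choose! P zf hzf hval using hch
  calc Npat N k r
      ≤ ((Set.univ : Set (Fin 2 × Fin 2)) ×ˢ patt Z (k + 1) (r + 1)).ncard := by
        apply Set.ncard_le_ncard_of_injOn
          (fun u => (P u, fun q : Fin (k + 1) × Fin (r + 1) => zf u ((q.1 : ℤ), (q.2 : ℤ))))
        · intro u hu
          exact ⟨Set.mem_univ _, zf u, hzf u hu, fun q => rfl⟩
        · intro u hu u' hu' hF
          have hP : P u = P u' := congrArg Prod.fst hF
          have hz : (fun q : Fin (k + 1) × Fin (r + 1) => zf u ((q.1 : ℤ), (q.2 : ℤ)))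
              = fun q => zf u' ((q.1 : ℤ), (q.2 : ℤ)) := congrArg Prod.snd hF
          funext q
          have hq1 : (q.1 : ℕ) + ((P u).1 : ℕ) < k + 1 := by omega
          have hq2 : (q.2 : ℕ) + ((P u).2 : ℕ) < r + 1 := by omega
          have h1 := congrFun hz (⟨(q.1 : ℕ) + ((P u).1 : ℕ), hq1⟩, ⟨(q.2 : ℕ) + ((P u).2 : ℕ), hq2⟩)
          simp only at h1
          rw [hval u hu q, hval u' hu' q, ← hP]
          push_cast at h1
          exact h1
    _ = 4 * (patt Z (k + 1) (r + 1)).ncard := SS_prod_ncard _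

lemma SS_stepB {A : Type*} [Finite A] [Nonempty A] {N Z : Set (ℤ × ℤ → A)}
    {π : (Fin 2 × Fin 2 → A) → A}
    (himg : (fun x : ℤ × ℤ → A => fun p : ℤ × ℤ => π (block 2 2 x p)) '' Z = N)
    (hdet : ∀ x ∈ Z, ∀ x' ∈ Z, ∀ p : ℤ × ℤ,
      (∀ d : ℤ, |d| ≤ (0 : ℤ) →
        π (block 2 2 x (p.1 + d, p.2)) = π (block 2 2 x' (p.1 + d, p.2))) →
      block 2 2 x p = block 2 2 x' p)
    (a b : ℕ) :
    (patt Z (2 * a) (2 * b)).ncard ≤ Npat N a b := by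
  have hch : ∀ v ∈ patt Z (2 * a) (2 * b), ∃ z ∈ Z,
      ∀ q : Fin (2 * a) × Fin (2 * b), v q = z ((q.1 : ℤ), (q.2 : ℤ)) := fun v hv => hv
  choose! zf hzf hval using hch
  apply Set.ncard_le_ncard_of_injOn
    (fun v => fun q : Fin a × Fin b => π (block 2 2 (zf v) ((q.1 : ℤ), (q.2 : ℤ))))
  · intro v hv
    refine ⟨fun p => π (block 2 2 (zf v) p), ?_, fun q => rfl⟩
    rw [← himg]
    exact ⟨zf v, hzf v hv, rfl⟩
  · intro v hv v' hv' hF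
    funext q
    have hq1 : (q.1 : ℕ) / 2 < a := by omega
    have hq2 : (q.2 : ℕ) / 2 < b := by omega
    have hb := hdet (zf v) (hzf v hv) (zf v') (hzf v' hv')
      ((((q.1 : ℕ) / 2 : ℕ) : ℤ), (((q.2 : ℕ) / 2 : ℕ) : ℤ)) ?_
    · have h2 := congrFun hb (⟨(q.1 : ℕ) % 2, by omega⟩, ⟨(q.2 : ℕ) % 2, by omega⟩)
      simp only [block] at h2
      have e1 : ((((q.1 : ℕ) / 2 : ℕ) : ℤ)) * (2:ℤ) + (((q.1 : ℕ) % 2 : ℕ) : ℤ) = ((q.1 : ℕ) : ℤ) := by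
        push_cast
        omega
      have e2 : ((((q.2 : ℕ) / 2 : ℕ) : ℤ)) * (2:ℤ) + (((q.2 : ℕ) % 2 : ℕ) : ℤ) = ((q.2 : ℕ) : ℤ) := by
        push_cast
        omega
      rw [hval v hv q, hval v' hv' q]
      push_cast at h2 e1 e2
      rw [e1, e2] at h2
      exact h2
    · intro d hd
      have hd0 : d = 0 := by
        have := abs_nonneg d
        have := abs_eq_zero.mp (le_antisymm hd this)
        exact this
      subst hd0
      simp only [add_zero]
      have := congrFun hF (⟨(q.1 : ℕ) / 2, hq1⟩, ⟨(q.2 : ℕ) / 2, hq2⟩)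
      simpa using this

lemma SS_key {A : Type*} [Finite A] [Nonempty A] {N Z : Set (ℤ × ℤ → A)}
    {π : (Fin 2 × Fin 2 → A) → A}
    (hcover : N = ⋃ i : Fin 2, ⋃ j : Fin 2, shift2 ((i : ℤ), (j : ℤ)) '' Z)
    (himg : (fun x : ℤ × ℤ → A => fun p : ℤ × ℤ => π (block 2 2 x p)) '' Z = N)
    (hdet : ∀ x ∈ Z, ∀ x' ∈ Z, ∀ p : ℤ × ℤ,
      (∀ d : ℤ, |d| ≤ (0 : ℤ) →
        π (block 2 2 x (p.1 + d, p.2)) = π (block 2 2 x' (p.1 + d, p.2))) →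
      block 2 2 x p = block 2 2 x' p)
    (a b : ℕ) :
    Npat N (2 * a) (2 * b) ≤ 4 * Npat N (a + 1) (b + 1) :=
  calc Npat N (2 * a) (2 * b)
      ≤ 4 * (patt Z (2 * a + 1) (2 * b + 1)).ncard := SS_stepA hcover _ _
    _ ≤ 4 * (patt Z (2 * (a + 1)) (2 * (b + 1))).ncard :=
        Nat.mul_le_mul_left _ (SS_stepMono Z (by omega) (by omega))
    _ ≤ 4 * Npat N (a + 1) (b + 1) := Nat.mul_le_mul_left _ (SS_stepB himg hdet _ _)

lemma SS_npat_pos {A : Type*} [Finite A] {N : Set (ℤ × ℤ → A)} (hN : N.Nonempty) (k r : ℕ) :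
    1 ≤ Npat N k r := by
  obtain ⟨x, hx⟩ := hN
  exact (Set.ncard_pos (Set.toFinite _)).mpr ⟨fun q => x ((q.1 : ℤ), (q.2 : ℤ)), x, hx, fun q => rfl⟩

/-- If a 2D subshift of finite type `N` `0`-simulates itself injectively with
parameters `2, 2`, then its vertical directional entropy is `0`. -/
theorem dirEntV_zero_of_self_simulation {A : Type*} [Fintype A]
    [TopologicalSpace A] [DiscreteTopology A]
    (N : Set (ℤ × ℤ → A)) (hcl : IsClosed N)
    (hsh : ∀ v : ℤ × ℤ, ∀ x ∈ N, shift2 v x ∈ N)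
    (hsim : LSimulatesInj N N 0 2 2)
    (h : ℝ) (hent : HasDirEntV N h) :
    h = 0 := by
  obtain ⟨g, hg, hgh⟩ := hent
  rcases N.eq_empty_or_nonempty with hNe | hNe
  · -- empty case
    have hzero : ∀ k r : ℕ, Npat N k r = 0 := by
      intro k r
      have : patt N k r = ∅ := by
        ext u
        simp [patt, hNe]
      simp [Npat, this]
    have hgk : ∀ k, g k = 0 := by
      intro k
      have h1 : Tendsto (fun r : ℕ => Real.log (Npat N k r : ℝ) / (r : ℝ)) atTop (nhds 0) := by
        have : (fun r : ℕ => Real.log (Npat N k r : ℝ) / (r : ℝ)) = fun _ => 0 := by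
          funext r
          simp [hzero]
        rw [this]
        exact tendsto_const_nhds
      exact tendsto_nhds_unique (hg k) h1
    have : Tendsto g atTop (nhds 0) := by
      have : g = fun _ => 0 := funext hgk
      rw [this]
      exact tendsto_const_nhds
    exact tendsto_nhds_unique hgh this
  · -- nonempty case
    obtain ⟨x₀, hx₀⟩ := hNe
    have : Nonempty A := ⟨x₀ (0, 0)⟩
    obtain ⟨Z, hZN, π, hcover, himg, hdet, hinj⟩ := hsim
    have hNne : N.Nonempty := ⟨x₀, hx₀⟩
    -- nonnegativity
    have hg0 : ∀ k, 0 ≤ g k := by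
      intro k
      refine ge_of_tendsto (hg k) (eventually_atTop.2 ⟨1, fun r hr => ?_⟩)
      apply div_nonneg _ (Nat.cast_nonneg r)
      apply Real.log_nonneg
      exact_mod_cast SS_npat_pos hNne k r
    have h0 : 0 ≤ h := ge_of_tendsto hgh (Eventually.of_forall hg0)
    -- step inequality on g
    have t2 : Tendsto (fun n : ℕ => 2 * n) atTop atTop :=
      tendsto_atTop_atTop.mpr fun n => ⟨n, fun a ha => by omega⟩
    have hstep : ∀ a : ℕ, g (2 * a) ≤ g (a + 1) / 2 := by
      intro a
      have L : Tendsto (fun b : ℕ => Real.log (Npat N (2 * a) (2 * b) : ℝ) / ((2 * b : ℕ) : ℝ))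
          atTop (nhds (g (2 * a))) := (hg (2 * a)).comp t2
      have hB : Tendsto (fun b : ℕ => Real.log (Npat N (a + 1) (b + 1) : ℝ) / ((b + 1 : ℕ) : ℝ))
          atTop (nhds (g (a + 1))) := (hg (a + 1)).comp (tendsto_add_atTop_nat 1)
      have hA : Tendsto (fun b : ℕ => Real.log 4 / (2 * (b : ℝ))) atTop (nhds 0) := by
        have h1 : Tendsto (fun b : ℕ => Real.log 4 * (1 / 2) * (1 / (b : ℝ))) atTop
            (nhds (Real.log 4 * (1 / 2) * 0)) :=
          tendsto_one_div_atTop_nhds_zero_nat.const_mul _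
        rw [mul_zero] at h1
        refine h1.congr fun b => ?_
        field_simp
      have hC : Tendsto (fun b : ℕ => ((b + 1 : ℕ) : ℝ) / (2 * (b : ℝ))) atTop (nhds (1 / 2)) := by
        have h1 : Tendsto (fun b : ℕ => 1 / 2 + (1 / 2) * (1 / (b : ℝ))) atTop
            (nhds (1 / 2 + (1 / 2) * 0)) :=
          tendsto_const_nhds.add (tendsto_one_div_atTop_nhds_zero_nat.const_mul _)
        rw [mul_zero, add_zero] at h1
        refine h1.congr' ?_
        filter_upwards [eventually_atTop.2 ⟨1, fun b hb => hb⟩] with b hb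
        have hb' : (b : ℝ) ≠ 0 := by positivity
        push_cast
        field_simp
      have R : Tendsto (fun b : ℕ =>
          Real.log 4 / (2 * (b : ℝ)) +
            Real.log (Npat N (a + 1) (b + 1) : ℝ) / ((b + 1 : ℕ) : ℝ) * (((b + 1 : ℕ) : ℝ) / (2 * (b : ℝ))))
          atTop (nhds (g (a + 1) / 2)) := by
        have := hA.add (hB.mul hC)
        rw [zero_add] at this
        convert this using 2
        ring
      refine le_of_tendsto_of_tendsto L R (eventually_atTop.2 ⟨1, fun b hb => ?_⟩)
      have hb' : (0 : ℝ) < 2 * (b : ℝ) := by positivity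
      have hmono := SS_key hcover himg hdet a b
      have hc1 : (1 : ℝ) ≤ (Npat N (2 * a) (2 * b) : ℝ) := by exact_mod_cast SS_npat_pos hNne _ _
      have hc2 : (1 : ℝ) ≤ (Npat N (a + 1) (b + 1) : ℝ) := by exact_mod_cast SS_npat_pos hNne _ _
      have hlog : Real.log (Npat N (2 * a) (2 * b) : ℝ)
          ≤ Real.log 4 + Real.log (Npat N (a + 1) (b + 1) : ℝ) := by
        rw [← Real.log_mul (by norm_num) (by linarith)]
        rw [Real.log_le_log_iff (by linarith) (by nlinarith)]
        calc (Npat N (2 * a) (2 * b) : ℝ) ≤ ((4 * Npat N (a + 1) (b + 1) : ℕ) : ℝ) := by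
              exact_mod_cast hmono
          _ = 4 * (Npat N (a + 1) (b + 1) : ℝ) := by push_cast; ring
      have hrw : Real.log (Npat N (a + 1) (b + 1) : ℝ) / ((b + 1 : ℕ) : ℝ) * (((b + 1 : ℕ) : ℝ) / (2 * (b : ℝ)))
          = Real.log (Npat N (a + 1) (b + 1) : ℝ) / (2 * (b : ℝ)) := by
        have : ((b + 1 : ℕ) : ℝ) ≠ 0 := by positivity
        field_simp
      have hcast : ((2 * b : ℕ) : ℝ) = 2 * (b : ℝ) := by push_cast; ring
      simp only [hrw, hcast, ← add_div]
      gcongr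
    -- conclude h ≤ h / 2
    have hh2 : h ≤ h / 2 := by
      have L2 : Tendsto (fun a : ℕ => g (2 * a)) atTop (nhds h) := hgh.comp t2
      have R2 : Tendsto (fun a : ℕ => g (a + 1) / 2) atTop (nhds (h / 2)) :=
        (hgh.comp (tendsto_add_atTop_nat 1)).div_const 2
      exact le_of_tendsto_of_tendsto' L2 R2 hstep
    linarith
end
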